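/- Let F_k, G_k be as above (k×(k+1) shift matrices). The set of k×(k+1) complex matrices X₂₁ satisfying X₂₁* F_k + F_k^T X₂₁ = 0 and X₂₁* G_k + G_k^T X₂₁ = 0 is {0}, i.e., the zero matrix is the only solution. -/

import Mathlib

private lemma pick_eq {k : ℕ} (f : Fin k → ℂ) (m : ℕ) :
    (∑ l : Fin k, if m = l.1 then f l else 0) =
      if h : m < k then f ⟨m, h⟩ else 0 := by
  split
  · next h =>
    rw [Finset.sum_eq_single ⟨m, h⟩]
    · simp
    · intro b _ hb
      rw [if_neg]
      intro hm
      exact hb (Fin.ext hm.symm)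
    · simp
  · next h =>
    apply Finset.sum_eq_zero
    intro l _
    rw [if_neg]
    omega

private lemma pick_eq' {k : ℕ} (f : Fin k → ℂ) (m : ℕ) :
    (∑ l : Fin k, if m = l.1 + 1 then f l else 0) =
      if h : 0 < m ∧ m - 1 < k then f ⟨m - 1, h.2⟩ else 0 := by
  split
  · next h =>
    rw [Finset.sum_eq_single ⟨m - 1, h.2⟩]
    · rw [if_pos (show m = (m-1)+1 by omega)]
    · intro b _ hb
      rw [if_neg]
      intro hm
      exact hb (Fin.ext (show (b:ℕ) = m-1 by omega))
    · simp
  · next h =>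
    apply Finset.sum_eq_zero
    intro l _
    rw [if_neg]
    omega

/-- With F_k and G_k the k×(k+1) shift matrices, the only k×(k+1) matrix X
satisfying X*F + Fᵀ·X = 0 and X*G + Gᵀ·X = 0 is X = 0. -/
theorem stmt_16 (k : ℕ)
    (F G : Matrix (Fin k) (Fin (k + 1)) ℂ)
    (hF : F = fun i j => if j.1 = i.1 + 1 then 1 else 0)
    (hG : G = fun i j => if j.1 = i.1 then 1 else 0)
    (X : Matrix (Fin k) (Fin (k + 1)) ℂ)
    (h1 : X.conjTranspose * F + F.transpose * X = 0)
    (h2 : X.conjTranspose * G + G.transpose * X = 0) :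
    X = 0 := by
  subst hF hG
  have hX : ∀ (a a' : ℕ) (ha : a < k) (ha' : a' < k) (b b' : ℕ) (hb : b < k+1)
      (hb' : b' < k+1), a = a' → b = b' → X ⟨a, ha⟩ ⟨b, hb⟩ = X ⟨a', ha'⟩ ⟨b', hb'⟩ := by
    intro a a' ha ha' b b' hb hb' h h'
    subst h h'
    rfl
  have e1 : ∀ i j : Fin (k+1),
      (if h : 0 < (j:ℕ) ∧ (j:ℕ) - 1 < k then star (X ⟨(j:ℕ)-1, h.2⟩ i) else 0) +
      (if h : 0 < (i:ℕ) ∧ (i:ℕ) - 1 < k then X ⟨(i:ℕ)-1, h.2⟩ j else 0) = 0 := by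
    intro i j
    have := congrFun (congrFun h1 i) j
    erw [Matrix.add_apply, Matrix.mul_apply, Matrix.mul_apply] at this
    simp only [Matrix.transpose, Matrix.of_apply] at this
    simp only [Matrix.add_apply, Matrix.mul_apply, Matrix.conjTranspose_apply,
      Matrix.transpose_apply, Matrix.zero_apply, mul_ite, ite_mul, mul_one, mul_zero,
      one_mul, zero_mul] at this
    rwa [pick_eq' (fun l => star (X l i)) (j:ℕ), pick_eq' (fun l => X l j) (i:ℕ)] at this
  have e2 : ∀ i j : Fin (k+1),
      (if h : (j:ℕ) < k then star (X ⟨(j:ℕ), h⟩ i) else 0) +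
      (if h : (i:ℕ) < k then X ⟨(i:ℕ), h⟩ j else 0) = 0 := by
    intro i j
    have := congrFun (congrFun h2 i) j
    erw [Matrix.add_apply, Matrix.mul_apply, Matrix.mul_apply] at this
    simp only [Matrix.transpose, Matrix.of_apply] at this
    simp only [Matrix.add_apply, Matrix.mul_apply, Matrix.conjTranspose_apply,
      Matrix.transpose_apply, Matrix.zero_apply, mul_ite, ite_mul, mul_one, mul_zero,
      one_mul, zero_mul] at this
    rwa [pick_eq (fun l => star (X l i)) (j:ℕ), pick_eq (fun l => X l j) (i:ℕ)] at this
  -- column 0 is zero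
  have col0 : ∀ (a : ℕ) (ha : a < k) (h0 : (0:ℕ) < k+1), X ⟨a, ha⟩ ⟨0, h0⟩ = 0 := by
    intro a ha h0
    have h := e1 ⟨0, h0⟩ ⟨a+1, by omega⟩
    rw [dif_pos (show 0 < a+1 ∧ a+1-1 < k from ⟨by omega, by omega⟩), dif_neg (show ¬(0 < 0 ∧ 0 - 1 < k) by omega)] at h
    rw [add_zero, star_eq_zero] at h
    rw [hX a (a+1-1) ha (by omega) 0 0 h0 h0 (by omega) rfl]
    exact h
  -- column k is zero
  have colk : ∀ (a : ℕ) (ha : a < k) (hk : k < k+1), X ⟨a, ha⟩ ⟨k, hk⟩ = 0 := by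
    intro a ha hk
    have h := e2 ⟨k, hk⟩ ⟨a, by omega⟩
    rw [dif_pos ha, dif_neg (show ¬ k < k by omega)] at h
    rw [add_zero, star_eq_zero] at h
    exact h
  -- skew relation from G : for p, q < k,  X p q = - star (X q p)
  have A : ∀ (p q : ℕ) (hp : p < k) (hq : q < k),
      X ⟨p, hp⟩ ⟨q, by omega⟩ = - star (X ⟨q, hq⟩ ⟨p, by omega⟩) := by
    intro p q hp hq
    have h := e2 ⟨p, by omega⟩ ⟨q, by omega⟩
    rw [dif_pos hq, dif_pos hp] at h
    linear_combination h
  -- relation from F : for 1 ≤ p ≤ k, 1 ≤ q ≤ k,  X (p-1) q = - star (X (q-1) p)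
  have B : ∀ (p q : ℕ) (hp : 0 < p ∧ p - 1 < k) (hq : 0 < q ∧ q - 1 < k),
      X ⟨p-1, hp.2⟩ ⟨q, by omega⟩ = - star (X ⟨q-1, hq.2⟩ ⟨p, by omega⟩) := by
    intro p q hp hq
    have h := e1 ⟨p, by omega⟩ ⟨q, by omega⟩
    rw [dif_pos hq, dif_pos hp] at h
    linear_combination h
  -- shift relation : X b a = X (b-1) (a+1)
  have S : ∀ (b a : ℕ) (hb1 : 1 ≤ b) (hb : b < k) (ha : a < k),
      X ⟨b, hb⟩ ⟨a, by omega⟩ = X ⟨b-1, by omega⟩ ⟨a+1, by omega⟩ := by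
    intro b a hb1 hb ha
    rw [A b a hb ha]
    have h := B (a+1) b ⟨by omega, by omega⟩ ⟨by omega, by omega⟩
    rw [hX (a+1-1) a (by omega) ha b b (by omega) (by omega) (by omega) rfl] at h
    rw [h]
    simp
  -- claim 1 : entries with i + j < k vanish (propagate to column 0)
  have claim1 : ∀ (c : ℕ) (a b : ℕ) (ha : a < k) (hb : b < k+1),
      b = c → a + c < k → X ⟨a, ha⟩ ⟨b, hb⟩ = 0 := by
    intro c
    induction c with
    | zero =>
      intro a b ha hb hbc _
      rw [hX a a ha ha b 0 hb (by omega) rfl hbc]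
      exact col0 a ha (by omega)
    | succ c ih =>
      intro a b ha hb hbc hlt
      have h := S (a+1) c (by omega) (by omega) (by omega)
      rw [hX (a+1-1) a (by omega) ha (c+1) b (by omega) hb (by omega) (by omega)] at h
      rw [← h]
      exact ih (a+1) c (by omega) (by omega) rfl (by omega)
  -- claim 2 : entries with i + j ≥ k vanish (propagate to column k)
  have claim2 : ∀ (d : ℕ) (a b : ℕ) (ha : a < k) (hb : b < k+1),
      b + d = k → k ≤ a + b → X ⟨a, ha⟩ ⟨b, hb⟩ = 0 := by
    intro d
    induction d with
    | zero =>
      intro a b ha hb hbd _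
      rw [hX a a ha ha b k hb (by omega) rfl (by omega)]
      exact colk a ha (by omega)
    | succ d ih =>
      intro a b ha hb hbd hge
      have h := S a b (by omega) ha (by omega)
      rw [h]
      exact ih (a-1) (b+1) (by omega) (by omega) (by omega) (by omega)
  ext i j
  rcases lt_or_ge (i.1 + j.1) k with h | h
  · have := claim1 j.1 i.1 j.1 i.isLt j.isLt rfl h
    simpa using this
  · have := claim2 (k - j.1) i.1 j.1 i.isLt j.isLt (by omega) h
    simpa using this
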